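/- Let G = [[G₁, G₂],[G₂ᵀ, G₃]] be a symmetric block matrix (with G₁ an ℓ×ℓ invertible block) depending smoothly on t, and suppose the Schur complement S = G₃ − G₂ᵀG₁⁻¹G₂ vanishes identically on an interval. Let Λ(t) = [[G₁⁻¹G₂Λ₃G₂ᵀG₁⁻ᵀ, −G₁⁻¹G₂Λ₃],[−(G₁⁻¹G₂Λ₃)ᵀ, Λ₃]] for a smooth symmetric Λ₃(t). Then tr(G(t) · dΛ/dt(t)) = tr(S(t) · dΛ₃/dt(t)) = 0 for all t in the interval. -/

import Mathlib

open Matrix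

/-- Entries of a matrix product are differentiable if the factors' entries are. -/
lemma aux_mul_entry_diff {m n p : Type*} [Fintype n]
    (A : ℝ → Matrix m n ℝ) (B : ℝ → Matrix n p ℝ) (t : ℝ)
    (hA : ∀ i j, DifferentiableAt ℝ (fun s => A s i j) t)
    (hB : ∀ i j, DifferentiableAt ℝ (fun s => B s i j) t) :
    ∀ i j, DifferentiableAt ℝ (fun s => (A s * B s) i j) t := by
  intro i j
  simp only [Matrix.mul_apply]
  exact DifferentiableAt.fun_sum fun q _ => (hA i q).mul (hB q j)

lemma aux_det_diff {n : ℕ} (A : ℝ → Matrix (Fin n) (Fin n) ℝ) (t : ℝ)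
    (hA : ∀ i j, DifferentiableAt ℝ (fun s => A s i j) t) :
    DifferentiableAt ℝ (fun s => (A s).det) t := by
  simp only [Matrix.det_apply, Units.smul_def, zsmul_eq_mul]
  exact DifferentiableAt.fun_sum fun σ _ =>
    (DifferentiableAt.fun_finsetProd (fun i _ => hA (σ i) i)).const_mul _

lemma aux_adjugate_diff {n : ℕ} (A : ℝ → Matrix (Fin n) (Fin n) ℝ) (t : ℝ)
    (hA : ∀ i j, DifferentiableAt ℝ (fun s => A s i j) t) :
    ∀ i j, DifferentiableAt ℝ (fun s => (A s).adjugate i j) t := by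
  intro i j
  simp only [Matrix.adjugate_apply]
  apply aux_det_diff
  intro p q
  simp only [Matrix.updateRow_apply]
  split_ifs
  · exact differentiableAt_const _
  · exact hA p q

lemma aux_inv_diff {n : ℕ} (A : ℝ → Matrix (Fin n) (Fin n) ℝ) (t : ℝ)
    (hA : ∀ i j, DifferentiableAt ℝ (fun s => A s i j) t)
    (hdet : (A t).det ≠ 0) :
    ∀ i j, DifferentiableAt ℝ (fun s => (A s)⁻¹ i j) t := by
  intro i j
  have h : ∀ s, (A s)⁻¹ i j = (A s).det⁻¹ * (A s).adjugate i j := by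
    intro s
    rw [Matrix.inv_def, Ring.inverse_eq_inv]
    simp [Matrix.smul_apply, smul_eq_mul]
  simp only [h]
  exact ((aux_det_diff A t hA).inv hdet).mul (aux_adjugate_diff A t hA i j)

/-- The key trace computation: if `Gc * M t = 0` and `(M t)ᵀ * Gc = 0`, then the
trace of `Gc` against the derivative of `s ↦ M s * Λ3 s * (M s)ᵀ` vanishes. -/
lemma aux_key {l k : ℕ} (Gc : Matrix (Fin l ⊕ Fin k) (Fin l ⊕ Fin k) ℝ)
    (M : ℝ → Matrix (Fin l ⊕ Fin k) (Fin k) ℝ) (Md : Matrix (Fin l ⊕ Fin k) (Fin k) ℝ)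
    (Λ3 Λ3d : ℝ → Matrix (Fin k) (Fin k) ℝ)
    (L : Matrix (Fin l ⊕ Fin k) (Fin l ⊕ Fin k) ℝ) (t : ℝ)
    (hM : ∀ i j, HasDerivAt (fun s => M s i j) (Md i j) t)
    (hΛ3 : ∀ i j, HasDerivAt (fun s => Λ3 s i j) (Λ3d t i j) t)
    (hΛ : ∀ i j, HasDerivAt (fun s => (M s * Λ3 s * (M s)ᵀ) i j) (L i j) t)
    (hGM : Gc * M t = 0) (hMG : (M t)ᵀ * Gc = 0) :
    (Gc * L).trace = 0 := by
  -- trace as a double sum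
  have htr : ∀ {m : Type} [Fintype m] (P Q : Matrix m m ℝ),
      (P * Q).trace = ∑ i, ∑ j, P i j * Q j i := by
    intro m _ P Q
    simp [Matrix.trace, Matrix.diag, Matrix.mul_apply]
  -- the function whose derivative we compute two ways
  have h4 : HasDerivAt (fun s => ∑ i, ∑ j, Gc i j * (M s * Λ3 s * (M s)ᵀ) j i)
      (∑ i, ∑ j, Gc i j * L j i) t :=
    HasDerivAt.fun_sum fun i _ => HasDerivAt.fun_sum fun j _ => (hΛ j i).const_mul _
  -- derivative of entries of Gc * M s
  have hGM' : ∀ p j, HasDerivAt (fun s => (Gc * M s) p j) ((Gc * Md) p j) t := by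
    intro p j
    simp only [Matrix.mul_apply]
    exact HasDerivAt.fun_sum fun q _ => (hM q j).const_mul _
  -- derivative of entries of N s = (M s)ᵀ * (Gc * M s) is zero
  have hN : ∀ i j, HasDerivAt (fun s => ((M s)ᵀ * (Gc * M s)) i j) 0 t := by
    intro i j
    have h := HasDerivAt.fun_sum (u := Finset.univ)
      (fun p (_ : p ∈ Finset.univ) => (hM p i).mul (hGM' p j))
    have hval : ∑ p, (Md p i * (Gc * M t) p j + M t p i * (Gc * Md) p j) = 0 := by
      rw [hGM]
      have h2 : ∑ p, M t p i * (Gc * Md) p j = ((M t)ᵀ * (Gc * Md)) i j := by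
        simp [Matrix.mul_apply, Matrix.transpose_apply]
      simp only [Matrix.zero_apply, mul_zero, zero_add]
      rw [h2, ← Matrix.mul_assoc, hMG, Matrix.zero_mul, Matrix.zero_apply]
    have hfun : (fun s => ((M s)ᵀ * (Gc * M s)) i j)
        = fun s => ∑ p, M s p i * (Gc * M s) p j := by
      funext s
      simp [Matrix.mul_apply, Matrix.transpose_apply]
    rw [hfun]
    simpa [hval] using h
  -- N t = 0
  have hNt : (M t)ᵀ * (Gc * M t) = 0 := by rw [hGM, Matrix.mul_zero]
  -- derivative of tr(N s * Λ3 s) is zero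
  have h6 : HasDerivAt (fun s => ∑ i, ∑ j, ((M s)ᵀ * (Gc * M s)) i j * Λ3 s j i) 0 t := by
    have h := HasDerivAt.fun_sum (u := Finset.univ)
      (fun i (_ : i ∈ Finset.univ) => HasDerivAt.fun_sum (u := Finset.univ)
        (fun j (_ : j ∈ Finset.univ) => (hN i j).mul (hΛ3 j i)))
    simpa [hNt] using h
  -- the two functions agree
  have hfe : (fun s => ∑ i, ∑ j, Gc i j * (M s * Λ3 s * (M s)ᵀ) j i)
      = fun s => ∑ i, ∑ j, ((M s)ᵀ * (Gc * M s)) i j * Λ3 s j i := by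
    funext s
    rw [← htr Gc (M s * Λ3 s * (M s)ᵀ), ← htr ((M s)ᵀ * (Gc * M s)) (Λ3 s)]
    calc (Gc * (M s * Λ3 s * (M s)ᵀ)).trace
        = ((Gc * (M s * Λ3 s)) * (M s)ᵀ).trace := by rw [← Matrix.mul_assoc]
      _ = ((M s)ᵀ * (Gc * (M s * Λ3 s))).trace := Matrix.trace_mul_comm _ _
      _ = ((M s)ᵀ * (Gc * M s) * Λ3 s).trace := by
          rw [← Matrix.mul_assoc Gc, ← Matrix.mul_assoc]
  rw [hfe] at h4
  have := h4.unique h6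
  rw [htr Gc L]
  exact this

theorem stmt10 (l k : ℕ) (a b : ℝ)
    (G1 G1d : ℝ → Matrix (Fin l) (Fin l) ℝ)
    (G2 G2d : ℝ → Matrix (Fin l) (Fin k) ℝ)
    (G3 G3d : ℝ → Matrix (Fin k) (Fin k) ℝ)
    (Λ3 Λ3d : ℝ → Matrix (Fin k) (Fin k) ℝ)
    (Λd : ℝ → Matrix (Fin l ⊕ Fin k) (Fin l ⊕ Fin k) ℝ)
    (hG1sym : ∀ t, (G1 t).IsSymm) (hG3sym : ∀ t, (G3 t).IsSymm)
    (hΛ3sym : ∀ t, (Λ3 t).IsSymm)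
    (hG1inv : ∀ t ∈ Set.Ioo a b, IsUnit (G1 t))
    -- the Schur complement vanishes identically on the interval:
    (hSchur : ∀ t ∈ Set.Ioo a b, G3 t - (G2 t)ᵀ * (G1 t)⁻¹ * G2 t = 0)
    -- smooth dependence on t (entrywise derivatives):
    (hG1d : ∀ t ∈ Set.Ioo a b, ∀ i j, HasDerivAt (fun s => G1 s i j) (G1d t i j) t)
    (hG2d : ∀ t ∈ Set.Ioo a b, ∀ i j, HasDerivAt (fun s => G2 s i j) (G2d t i j) t)
    (hG3d : ∀ t ∈ Set.Ioo a b, ∀ i j, HasDerivAt (fun s => G3 s i j) (G3d t i j) t)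
    (hΛ3d : ∀ t ∈ Set.Ioo a b, ∀ i j, HasDerivAt (fun s => Λ3 s i j) (Λ3d t i j) t)
    -- Λd is the derivative of the block matrix Λ(t):
    (hΛd : ∀ t ∈ Set.Ioo a b, ∀ i j,
      HasDerivAt (fun s =>
        (Matrix.fromBlocks
          ((G1 s)⁻¹ * G2 s * Λ3 s * (G2 s)ᵀ * ((G1 s)⁻¹)ᵀ)
          (-((G1 s)⁻¹ * G2 s * Λ3 s))
          (-((G1 s)⁻¹ * G2 s * Λ3 s)ᵀ)
          (Λ3 s)) i j)
        (Λd t i j) t) :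
    ∀ t ∈ Set.Ioo a b,
      (Matrix.fromBlocks (G1 t) (G2 t) (G2 t)ᵀ (G3 t) * Λd t).trace
        = ((G3 t - (G2 t)ᵀ * (G1 t)⁻¹ * G2 t) * Λ3d t).trace
      ∧ (Matrix.fromBlocks (G1 t) (G2 t) (G2 t)ᵀ (G3 t) * Λd t).trace = 0 := by
  intro t ht
  -- the column-block matrix M
  set M : ℝ → Matrix (Fin l ⊕ Fin k) (Fin k) ℝ :=
    fun s => Matrix.fromRows (-((G1 s)⁻¹ * G2 s)) 1 with hMdef
  -- the block matrix Λ equals M Λ3 Mᵀ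
  have hfactor : ∀ s, (M s * Λ3 s * (M s)ᵀ) =
      Matrix.fromBlocks
        ((G1 s)⁻¹ * G2 s * Λ3 s * (G2 s)ᵀ * ((G1 s)⁻¹)ᵀ)
        (-((G1 s)⁻¹ * G2 s * Λ3 s))
        (-((G1 s)⁻¹ * G2 s * Λ3 s)ᵀ)
        (Λ3 s) := by
    intro s
    rw [hMdef]
    rw [Matrix.fromRows_mul, Matrix.transpose_fromRows, Matrix.fromRows_mul_fromCols]
    rw [Matrix.fromBlocks_inj]
    refine ⟨?_, ?_, ?_, ?_⟩
    · simp only [Matrix.transpose_neg, Matrix.mul_neg, Matrix.neg_mul, neg_neg,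
        Matrix.transpose_mul, Matrix.mul_assoc]
    · rw [Matrix.transpose_one, Matrix.mul_one, Matrix.neg_mul]
    · rw [Matrix.transpose_neg, Matrix.one_mul, Matrix.mul_neg,
        Matrix.transpose_mul, Matrix.transpose_mul, (hΛ3sym s).eq,
        Matrix.transpose_mul]
    · rw [Matrix.transpose_one, Matrix.one_mul, Matrix.mul_one]
  -- differentiability of entries of M
  have hdet : (G1 t).det ≠ 0 := by
    have := (Matrix.isUnit_iff_isUnit_det (G1 t)).mp (hG1inv t ht)
    exact this.ne_zero
  have hG1diff : ∀ i j, DifferentiableAt ℝ (fun s => G1 s i j) t :=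
    fun i j => (hG1d t ht i j).differentiableAt
  have hG2diff : ∀ i j, DifferentiableAt ℝ (fun s => G2 s i j) t :=
    fun i j => (hG2d t ht i j).differentiableAt
  have hinvdiff : ∀ i j, DifferentiableAt ℝ (fun s => (G1 s)⁻¹ i j) t :=
    aux_inv_diff G1 t hG1diff hdet
  have hMdiff : ∀ i j, DifferentiableAt ℝ (fun s => M s i j) t := by
    intro i j
    rw [hMdef]
    cases i with
    | inl i =>
        simp only [Matrix.fromRows_apply_inl, Matrix.neg_apply]
        exact (aux_mul_entry_diff (fun s => (G1 s)⁻¹) G2 t hinvdiff hG2diff i j).neg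
    | inr i =>
        simp only [Matrix.fromRows_apply_inr]
        exact differentiableAt_const _
  set Md : Matrix (Fin l ⊕ Fin k) (Fin k) ℝ :=
    fun i j => deriv (fun s => M s i j) t with hMdd
  have hM : ∀ i j, HasDerivAt (fun s => M s i j) (Md i j) t :=
    fun i j => (hMdiff i j).hasDerivAt
  -- Gc * M t = 0
  set Gc := Matrix.fromBlocks (G1 t) (G2 t) (G2 t)ᵀ (G3 t) with hGcdef
  have hGcsym : Gcᵀ = Gc := by
    rw [hGcdef, Matrix.fromBlocks_transpose, Matrix.transpose_transpose,
      (hG1sym t).eq, (hG3sym t).eq]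
  have hGM : Gc * M t = 0 := by
    rw [hGcdef, hMdef, Matrix.fromBlocks_mul_fromRows]
    have h1 : G1 t * -((G1 t)⁻¹ * G2 t) + G2 t * (1 : Matrix (Fin k) (Fin k) ℝ) = 0 := by
      rw [Matrix.mul_neg, ← Matrix.mul_assoc,
        Matrix.mul_nonsing_inv _ ((Matrix.isUnit_iff_isUnit_det (G1 t)).mp (hG1inv t ht)),
        Matrix.one_mul, Matrix.mul_one, neg_add_cancel]
    have h2 : (G2 t)ᵀ * -((G1 t)⁻¹ * G2 t) + G3 t * (1 : Matrix (Fin k) (Fin k) ℝ) = 0 := by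
      have hs := hSchur t ht
      rw [sub_eq_zero] at hs
      rw [Matrix.mul_neg, ← Matrix.mul_assoc, Matrix.mul_one, hs]
      exact neg_add_cancel _
    rw [h1, h2, Matrix.fromRows_zero]
  have hMG : (M t)ᵀ * Gc = 0 := by
    have := congrArg Matrix.transpose hGM
    rwa [Matrix.transpose_mul, hGcsym, Matrix.transpose_zero] at this
  -- apply the key lemma
  have hkey : (Gc * Λd t).trace = 0 := by
    apply aux_key Gc M Md Λ3 Λ3d (Λd t) t hM (hΛ3d t ht) _ hGM hMG
    intro i j
    have := hΛd t ht i j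
    have hfun : (fun s => (M s * Λ3 s * (M s)ᵀ) i j)
        = fun s => (Matrix.fromBlocks
          ((G1 s)⁻¹ * G2 s * Λ3 s * (G2 s)ᵀ * ((G1 s)⁻¹)ᵀ)
          (-((G1 s)⁻¹ * G2 s * Λ3 s))
          (-((G1 s)⁻¹ * G2 s * Λ3 s)ᵀ)
          (Λ3 s)) i j := by
      funext s
      rw [hfactor s]
    rw [hfun]
    exact this
  refine ⟨?_, hkey⟩
  rw [hkey, hSchur t ht, Matrix.zero_mul, Matrix.trace_zero]
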